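/- Let λ_1, …, λ_r be distinct complex numbers and L_j(z) = ∏_{i≠j} (z - λ_i)/(λ_j - λ_i) the Lagrange interpolation polynomials. Let Λ be a linear functional on ℂ[z,w] with Λ(w^i z^j) = γ(i,j), conjugate-symmetric, positive semidefinite, and such that ∏_{i=1}^r (z - λ_i) is a characteristic polynomial (Λ annihilates w^m z^n ∏(z - λ_i) and its conjugate). Then γ(m,n) = Σ_{i=1}^r c_i · conj(λ_i)^m · λ_i^n for all m, n ≥ 0, where c_i = Λ(L_i · conj(L_i)) ≥ 0. Hence the measure μ = Σ c_i δ_{λ_i} represents γ. -/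

import Mathlib

open MvPolynomial Complex

/-- The involution on `ℂ[z,w]` conjugating coefficients and swapping the
two variables (`0 = w = z̄`, `1 = z`). -/
noncomputable def polyBar (p : MvPolynomial (Fin 2) ℂ) : MvPolynomial (Fin 2) ℂ :=
  MvPolynomial.rename (Equiv.swap (0 : Fin 2) 1)
    (MvPolynomial.map (starRingEnd ℂ) p)

/-- The Lagrange basis polynomial `Lⱼ(z) = ∏_{i≠j} (z-λᵢ)/(λⱼ-λᵢ)`, viewed as
an element of `ℂ[z,w]` in the variable `z`. -/
noncomputable def lagrangeMv {r : ℕ} (lam : Fin r → ℂ) (j : Fin r) :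
    MvPolynomial (Fin 2) ℂ :=
  Polynomial.aeval (X (1 : Fin 2)) (Lagrange.basis Finset.univ lam j)

namespace RieszAux

lemma polyBar_mul (p q : MvPolynomial (Fin 2) ℂ) : polyBar (p*q) = polyBar p * polyBar q := by
  simp [polyBar]

lemma polyBar_add (p q : MvPolynomial (Fin 2) ℂ) : polyBar (p+q) = polyBar p + polyBar q := by
  simp [polyBar]

lemma polyBar_smul (c : ℂ) (p : MvPolynomial (Fin 2) ℂ) :
    polyBar (c • p) = (starRingEnd ℂ c) • polyBar p := by
  simp [polyBar, MvPolynomial.smul_eq_C_mul]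

lemma polyBar_polyBar (p : MvPolynomial (Fin 2) ℂ) : polyBar (polyBar p) = p := by
  simp [polyBar, MvPolynomial.map_rename, MvPolynomial.map_map, MvPolynomial.rename_rename]
  have h2 : (Equiv.swap (0:Fin 2) 1) ∘ (Equiv.swap (0:Fin 2) 1) = id := by
    ext x; simp
  rw [h2, MvPolynomial.map_id, MvPolynomial.rename_id]
  rfl

lemma polyBar_X1 : polyBar (X (1 : Fin 2)) = X 0 := by simp [polyBar]

lemma polyBar_sum {ι : Type*} (s : Finset ι) (f : ι → MvPolynomial (Fin 2) ℂ) :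
    polyBar (∑ j ∈ s, f j) = ∑ j ∈ s, polyBar (f j) := by
  simp [polyBar]

lemma polyBar_sub (p q : MvPolynomial (Fin 2) ℂ) : polyBar (p-q) = polyBar p - polyBar q := by
  simp [polyBar]

lemma polyBar_pow (p : MvPolynomial (Fin 2) ℂ) (n : ℕ) : polyBar (p^n) = polyBar p ^ n := by
  simp [polyBar]

/-- The embedding `ℂ[z] → ℂ[z,w]`. -/
noncomputable def ev : Polynomial ℂ →ₐ[ℂ] MvPolynomial (Fin 2) ℂ :=
  Polynomial.aeval (X (1 : Fin 2))

lemma ev_prod (r : ℕ) (lam : Fin r → ℂ) :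
    ev (∏ i, (Polynomial.X - Polynomial.C (lam i))) = ∏ i, (X (1:Fin 2) - C (lam i)) := by
  simp [ev]

lemma lam_zero (Λ : MvPolynomial (Fin 2) ℂ →ₗ[ℂ] ℂ)
    (h : ∀ m n : ℕ, Λ (X 0 ^ m * X 1 ^ n) = 0) (p : MvPolynomial (Fin 2) ℂ) : Λ p = 0 := by
  rw [p.as_sum, map_sum]
  refine Finset.sum_eq_zero fun d _ => ?_
  have hm : (monomial d) (coeff d p) = coeff d p • (X (0:Fin 2) ^ d 0 * X 1 ^ d 1) := by
    rw [monomial_eq, Finsupp.prod_pow, Fin.prod_univ_two, smul_eq_C_mul]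
  rw [hm, map_smul, h, smul_zero]

lemma ann (Λ : MvPolynomial (Fin 2) ℂ →ₗ[ℂ] ℂ) (q0 : MvPolynomial (Fin 2) ℂ)
    (h : ∀ m n : ℕ, Λ (X 0^m * X 1^n * q0) = 0) (p : MvPolynomial (Fin 2) ℂ) :
    Λ (p * q0) = 0 := by
  have := lam_zero (Λ.comp (LinearMap.mulRight ℂ q0)) (fun m n => by simpa using h m n) p
  simpa using this

lemma dvd_of_root (r : ℕ) (lam : Fin r → ℂ) (hinj : Function.Injective lam) (P : Polynomial ℂ)
    (h : ∀ k, P.eval (lam k) = 0) :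
    (∏ i, (Polynomial.X - Polynomial.C (lam i))) ∣ P :=
  Finset.prod_dvd_of_coprime (fun a _ b _ hab => Polynomial.pairwise_coprime_X_sub_C hinj hab)
    (fun i _ => Polynomial.dvd_iff_isRoot.mpr (h i))

section

variable (Λ : MvPolynomial (Fin 2) ℂ →ₗ[ℂ] ℂ) {r : ℕ} {lam : Fin r → ℂ}
  (hinj : Function.Injective lam)
  (hchar : ∀ m n : ℕ,
      Λ (X 0 ^ m * X 1 ^ n * ∏ i, (X 1 - C (lam i))) = 0 ∧
      Λ (X 0 ^ m * X 1 ^ n * polyBar (∏ i, (X 1 - C (lam i)))) = 0)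

include hinj hchar in
/-- Reduction in the `z` slot. -/
lemma red_z (P P' : Polynomial ℂ) (h : ∀ k, P.eval (lam k) = P'.eval (lam k))
    (u : MvPolynomial (Fin 2) ℂ) : Λ (ev P * u) = Λ (ev P' * u) := by
  obtain ⟨s, hs⟩ : (∏ i, (Polynomial.X - Polynomial.C (lam i))) ∣ (P - P') :=
    dvd_of_root r lam hinj _ (fun k => by simp [h k])
  have key : ev P * u - ev P' * u = (ev s * u) * ∏ i, (X (1:Fin 2) - C (lam i)) := by
    have : ev P - ev P' = ev s * ∏ i, (X (1:Fin 2) - C (lam i)) := by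
      rw [← map_sub, hs, map_mul, ev_prod, mul_comm]
    rw [← sub_mul, this]; ring
  have h2 := ann Λ _ (fun m n => (hchar m n).1) (ev s * u)
  have h3 : Λ (ev P * u) - Λ (ev P' * u) = 0 := by rw [← map_sub, key, h2]
  exact sub_eq_zero.mp h3

include hinj hchar in
/-- Reduction in the `w` (conjugate) slot. -/
lemma red_w (P P' : Polynomial ℂ) (h : ∀ k, P.eval (lam k) = P'.eval (lam k))
    (u : MvPolynomial (Fin 2) ℂ) :
    Λ (u * polyBar (ev P)) = Λ (u * polyBar (ev P')) := by
  obtain ⟨s, hs⟩ : (∏ i, (Polynomial.X - Polynomial.C (lam i))) ∣ (P - P') :=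
    dvd_of_root r lam hinj _ (fun k => by simp [h k])
  have key : u * polyBar (ev P) - u * polyBar (ev P')
      = (u * polyBar (ev s)) * polyBar (∏ i, (X (1:Fin 2) - C (lam i))) := by
    have : ev P - ev P' = ev s * ∏ i, (X (1:Fin 2) - C (lam i)) := by
      rw [← map_sub, hs, map_mul, ev_prod, mul_comm]
    rw [← mul_sub, ← polyBar_sub, this, polyBar_mul]; ring
  have h2 := ann Λ _ (fun m n => (hchar m n).2) (u * polyBar (ev s))
  have h3 : Λ (u * polyBar (ev P)) - Λ (u * polyBar (ev P')) = 0 := by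
    rw [← map_sub, key, h2]
  exact sub_eq_zero.mp h3

variable (hsym : ∀ p, Λ (polyBar p) = (starRingEnd ℂ) (Λ p))
  (hpos : ∀ p, 0 ≤ (Λ (p * polyBar p)).re ∧ (Λ (p * polyBar p)).im = 0)

include hsym hpos in
/-- Degenerate Cauchy–Schwarz: a null vector is orthogonal to everything. -/
lemma cs (u v : MvPolynomial (Fin 2) ℂ) (h0 : Λ (u * polyBar u) = 0) :
    Λ (u * polyBar v) = 0 := by
  by_contra hβ
  set β := Λ (u * polyBar v) with hβdef
  have hvu : Λ (v * polyBar u) = (starRingEnd ℂ) β := by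
    have h1 := hsym (u * polyBar v)
    rw [polyBar_mul, polyBar_polyBar, mul_comm] at h1
    exact h1
  set c := (Λ (v * polyBar v)).re with hc
  have hc0 : 0 ≤ c := (hpos v).1
  have hd : Λ (v * polyBar v) = (c : ℂ) := by
    apply Complex.ext <;> simp [hc, (hpos v).2]
  set s : ℝ := 1/(c+1) with hs
  have hspos : 0 < s := by rw [hs]; positivity
  set t : ℂ := -(s:ℂ) * β with ht
  have expand : (u + t•v) * polyBar (u + t•v)
      = u * polyBar u + (starRingEnd ℂ t) • (u * polyBar v) + t • (v * polyBar u)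
        + (t * starRingEnd ℂ t) • (v * polyBar v) := by
    rw [polyBar_add, polyBar_smul]
    simp only [MvPolynomial.smul_eq_C_mul, map_mul]
    ring
  have hval : Λ ((u + t•v) * polyBar (u + t•v))
      = ((s^2*c - 2*s) * Complex.normSq β : ℝ) := by
    rw [expand, map_add, map_add, map_add, map_smul, map_smul, map_smul, h0, hvu, hd, ← hβdef]
    rw [ht]
    simp only [smul_eq_mul, map_mul, map_neg, Complex.conj_ofReal]
    apply Complex.ext <;>
      simp [Complex.normSq_apply, Complex.mul_re, Complex.mul_im, ← Complex.ofReal_pow] <;> ring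
  have hge := (hpos (u + t•v)).1
  rw [hval, Complex.ofReal_re] at hge
  have hβn : 0 < Complex.normSq β := Complex.normSq_pos.mpr hβ
  have hsc : s * (c+1) = 1 := by rw [hs]; field_simp
  nlinarith [mul_pos hspos hβn, mul_pos (mul_pos hspos hspos) hβn]

end

end RieszAux

/-- If `Λ` is a conjugate-symmetric positive semidefinite Riesz functional for
`γ` which annihilates `w^m z^n ∏(z - λᵢ)` and its conjugate, then
`γ(m,n) = ∑ cᵢ λ̄ᵢ^m λᵢ^n` with `cᵢ = Λ(Lᵢ·L̄ᵢ) ≥ 0`; i.e. the finitely atomic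
measure `∑ cᵢ δ_{λᵢ}` represents `γ`. -/
theorem riesz_functional_atomic_representation
    (γ : ℕ → ℕ → ℂ) (r : ℕ) (lam : Fin r → ℂ) (hinj : Function.Injective lam)
    (Λ : MvPolynomial (Fin 2) ℂ →ₗ[ℂ] ℂ)
    (hmono : ∀ i j : ℕ, Λ (X 0 ^ i * X 1 ^ j) = γ i j)
    (hsym : ∀ p, Λ (polyBar p) = (starRingEnd ℂ) (Λ p))
    (hpos : ∀ p, 0 ≤ (Λ (p * polyBar p)).re ∧ (Λ (p * polyBar p)).im = 0)
    (hchar : ∀ m n : ℕ,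
      Λ (X 0 ^ m * X 1 ^ n * ∏ i, (X 1 - C (lam i))) = 0 ∧
      Λ (X 0 ^ m * X 1 ^ n * polyBar (∏ i, (X 1 - C (lam i)))) = 0) :
    (∀ i, 0 ≤ (Λ (lagrangeMv lam i * polyBar (lagrangeMv lam i))).re ∧
      (Λ (lagrangeMv lam i * polyBar (lagrangeMv lam i))).im = 0) ∧
    ∀ m n : ℕ, γ m n = ∑ i,
      Λ (lagrangeMv lam i * polyBar (lagrangeMv lam i))
        * (starRingEnd ℂ) (lam i) ^ m * lam i ^ n := by
  classical
  open RieszAux in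
  refine ⟨fun i => hpos _, fun m n => ?_⟩
  set Lp : Fin r → Polynomial ℂ := fun j => Lagrange.basis Finset.univ lam j with hLp
  have hev : ∀ j, lagrangeMv lam j = RieszAux.ev (Lp j) := fun j => rfl
  have evalδ : ∀ j k, (Lp j).eval (lam k) = if j = k then 1 else 0 := by
    intro j k
    by_cases h : j = k
    · subst h
      simp [hLp, Lagrange.eval_basis_self hinj.injOn (Finset.mem_univ j)]
    · simp [hLp, h, Lagrange.eval_basis_of_ne h (Finset.mem_univ k)]
  -- interpolation of powers
  have interp : ∀ (p : ℕ) (k : Fin r),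
      (Polynomial.X ^ p : Polynomial ℂ).eval (lam k)
        = (∑ j, Polynomial.C (lam j ^ p) * Lp j).eval (lam k) := by
    intro p k
    rw [Polynomial.eval_finset_sum]
    simp only [Polynomial.eval_mul, Polynomial.eval_C, evalδ]
    simp [Finset.sum_ite_eq]
  -- cross terms vanish
  have cross : ∀ j i : Fin r, j ≠ i →
      Λ (lagrangeMv lam j * polyBar (lagrangeMv lam i)) = 0 := by
    intro j i hne
    set u := lagrangeMv lam j * polyBar (lagrangeMv lam i) with hu
    set v := polyBar (lagrangeMv lam j) with hv
    have h1 : Λ (lagrangeMv lam j * polyBar (lagrangeMv lam i)) = Λ (u * polyBar v) := by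
      have := RieszAux.red_z Λ hinj hchar (Lp j) (Lp j * Lp j)
        (fun k => by simp [evalδ]) (polyBar (lagrangeMv lam i))
      rw [hev j, this]
      congr 1
      rw [hu, hv, polyBar_polyBar, map_mul, ← hev j]
      ring
    have h0 : Λ (u * polyBar u) = 0 := by
      have heq : u * polyBar u
          = RieszAux.ev (Lp j * Lp i) * polyBar (RieszAux.ev (Lp j * Lp i)) := by
        rw [hu, polyBar_mul, polyBar_polyBar, map_mul, ← hev j, ← hev i, polyBar_mul]
        ring
      rw [heq]
      have := RieszAux.red_z Λ hinj hchar (Lp j * Lp i) 0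
        (fun k => by simp [evalδ]; rintro rfl; exact hne)
        (polyBar (RieszAux.ev (Lp j * Lp i)))
      rw [this]; simp
    rw [h1]
    exact RieszAux.cs Λ hsym hpos u v h0
  -- main computation
  have e0 : γ m n = Λ (RieszAux.ev (Polynomial.X ^ n) * polyBar (RieszAux.ev (Polynomial.X ^ m))) := by
    rw [← hmono m n]
    congr 1
    rw [map_pow, map_pow]
    rw [show RieszAux.ev Polynomial.X = X (1:Fin 2) from by simp [RieszAux.ev]]
    rw [polyBar_pow, polyBar_X1]
    ring
  rw [e0]
  rw [RieszAux.red_w Λ hinj hchar (Polynomial.X ^ m) (∑ j, Polynomial.C (lam j ^ m) * Lp j)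
    (interp m) _]
  rw [RieszAux.red_z Λ hinj hchar (Polynomial.X ^ n) (∑ j, Polynomial.C (lam j ^ n) * Lp j)
    (interp n) _]
  have evsum : ∀ p : ℕ, RieszAux.ev (∑ j, Polynomial.C (lam j ^ p) * Lp j)
      = ∑ j, (lam j ^ p) • RieszAux.ev (Lp j) := by
    intro p
    rw [map_sum]
    refine Finset.sum_congr rfl fun j _ => ?_
    rw [map_mul, MvPolynomial.smul_eq_C_mul]
    congr 1
    simp [RieszAux.ev]
  have barsum : polyBar (∑ j, (lam j ^ m) • RieszAux.ev (Lp j))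
      = ∑ j, ((starRingEnd ℂ) (lam j) ^ m) • polyBar (RieszAux.ev (Lp j)) := by
    rw [RieszAux.polyBar_sum]
    refine Finset.sum_congr rfl fun j _ => ?_
    rw [RieszAux.polyBar_smul, map_pow]
  rw [evsum n, evsum m, barsum, Finset.sum_mul_sum, map_sum]
  refine Finset.sum_congr rfl fun j _ => ?_
  rw [map_sum, Finset.sum_eq_single j]
  · have hs : ((lam j ^ n) • RieszAux.ev (Lp j)) * (((starRingEnd ℂ) (lam j) ^ m) • polyBar (RieszAux.ev (Lp j)))
        = (lam j ^ n * (starRingEnd ℂ) (lam j) ^ m) • (RieszAux.ev (Lp j) * polyBar (RieszAux.ev (Lp j))) := by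
      simp only [MvPolynomial.smul_eq_C_mul, map_mul]; ring
    rw [hs, map_smul, ← hev j, smul_eq_mul]
    ring
  · intro i _ hij
    have hs : ((lam j ^ n) • RieszAux.ev (Lp j)) * (((starRingEnd ℂ) (lam i) ^ m) • polyBar (RieszAux.ev (Lp i)))
        = (lam j ^ n * (starRingEnd ℂ) (lam i) ^ m) • (RieszAux.ev (Lp j) * polyBar (RieszAux.ev (Lp i))) := by
      simp only [MvPolynomial.smul_eq_C_mul, map_mul]; ring
    rw [hs, map_smul, ← hev j, ← hev i, cross j i (fun h => hij h.symm), smul_zero]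
  · intro h; exact absurd (Finset.mem_univ j) h
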